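/- Let D be a graph, W ⊆ V(D) a cutset such that every component of D − W is a complete graph, c(D − W) ≥ 3, and every vertex of W is adjacent to every vertex of D − W (the bipartite graph between W and V(D) \ W is complete). Let a, b be distinct vertices of D with a, b ∈ W ∪ V(D − W). If c(D − W) ≥ |W| + 1, then there exists a path in D from a to b containing all vertices of W and all vertices of any prescribed |W| − 1 components of D − W (when a, b ∈ W). -/

import Mathlib

open SimpleGraph

/-- The number of connected components of `G − S`. -/
noncomputable def numComp {V : Type*} (G : SimpleGraph V) (S : Set V) : ℕ :=
  Nat.card (G.induce Sᶜ).ConnectedComponent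

/-- `G` is `t`-tough: every cutset `S` satisfies `|S| ≥ t · c(G − S)`. -/
def Tough {V : Type*} (t : ℝ) (G : SimpleGraph V) : Prop :=
  ∀ S : Set V, 2 ≤ numComp G S → t * (numComp G S : ℝ) ≤ (S.ncard : ℝ)

/-- `G` contains no induced copy of `H`. -/
def InducedFree {W V : Type*} (H : SimpleGraph W) (G : SimpleGraph V) : Prop :=
  ¬ ∃ f : W ↪ V, ∀ a b : W, G.Adj (f a) (f b) ↔ H.Adj a b

/-- `P₃ ∪ P₁`: a path on three vertices plus one isolated vertex. -/
def P3UnionP1 : SimpleGraph (Fin 4) := SimpleGraph.fromEdgeSet {s(0, 1), s(1, 2)}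

/-- `P₃ ∪ 2P₁`: a path on three vertices plus two isolated vertices. -/
def P3Union2P1 : SimpleGraph (Fin 5) := SimpleGraph.fromEdgeSet {s(0, 1), s(1, 2)}

namespace Stmt19Aux

/-- Interleave a list of blocks with a list of separators. -/
def weave {α : Type*} : List (List α) → List α → List α
  | [], _ => []
  | c :: _, [] => c
  | c :: cs, w :: ws => c ++ w :: weave cs ws

lemma mem_weave {α : Type*} :
    ∀ (cs : List (List α)) (ws : List α) (x : α),
      x ∈ weave cs ws → x ∈ ws ∨ ∃ c ∈ cs, x ∈ c
  | [], _, x, h => by simp [weave] at h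
  | c :: cs, [], x, h => by
      right; exact ⟨c, by simp, h⟩
  | c :: cs, w :: ws, x, h => by
      simp only [weave, List.mem_append, List.mem_cons] at h
      rcases h with h | h | h
      · exact Or.inr ⟨c, by simp, h⟩
      · exact Or.inl (by simp [h])
      · rcases mem_weave cs ws x h with h' | ⟨c', hc', hx⟩
        · exact Or.inl (by simp [h'])
        · exact Or.inr ⟨c', by simp [hc'], hx⟩

lemma weave_mem {α : Type*} :
    ∀ (cs : List (List α)) (ws : List α), cs.length = ws.length + 1 →
      ∀ x : α, (x ∈ ws ∨ ∃ c ∈ cs, x ∈ c) → x ∈ weave cs ws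
  | [], ws, h, x, _ => by simp at h
  | c :: cs, [], h, x, hx => by
      simp only [List.length_nil, Nat.zero_add, List.length_cons, Nat.add_left_inj] at h
      have : cs = [] := List.length_eq_zero_iff.mp (by omega)
      subst this
      rcases hx with h' | ⟨c', hc', hx⟩
      · simp at h'
      · simp only [List.mem_singleton] at hc'
        subst hc'; exact hx
  | c :: cs, w :: ws, h, x, hx => by
      simp only [List.length_cons, Nat.add_left_inj] at h
      simp only [weave, List.mem_append, List.mem_cons]
      rcases hx with h' | ⟨c', hc', hxc⟩
      · rcases List.mem_cons.mp h' with h'' | h''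
        · exact Or.inr (Or.inl h'')
        · exact Or.inr (Or.inr (weave_mem cs ws h x (Or.inl h'')))
      · rcases List.mem_cons.mp hc' with h'' | h''
        · subst h''; exact Or.inl hxc
        · exact Or.inr (Or.inr (weave_mem cs ws h x (Or.inr ⟨c', h'', hxc⟩)))

lemma weave_nodup {α : Type*} (Wset : Set α) :
    ∀ (cs : List (List α)) (ws : List α),
      ws.Nodup → (∀ w ∈ ws, w ∈ Wset) →
      (∀ c ∈ cs, c.Nodup ∧ ∀ v ∈ c, v ∉ Wset) →
      cs.Pairwise List.Disjoint →
      (weave cs ws).Nodup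
  | [], ws, _, _, _, _ => by simp [weave]
  | c :: cs, [], _, _, hc, _ => (hc c (by simp)).1
  | c :: cs, w :: ws, hnd, hws, hc, hdisj => by
      have hrest : (weave cs ws).Nodup :=
        weave_nodup Wset cs ws (List.Nodup.of_cons hnd)
          (fun x hx => hws x (by simp [hx]))
          (fun c' hc' => hc c' (by simp [hc']))
          (List.Pairwise.of_cons hdisj)
      have hwW : w ∈ Wset := hws w (by simp)
      have hwrest : w ∉ weave cs ws := by
        intro hmem
        rcases mem_weave cs ws w hmem with h' | ⟨c', hc', hx⟩
        · exact (List.nodup_cons.mp hnd).1 h'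
        · exact (hc c' (by simp [hc'])).2 w hx hwW
      show (c ++ w :: weave cs ws).Nodup
      rw [List.nodup_append]
      refine ⟨(hc c (by simp)).1, List.nodup_cons.mpr ⟨hwrest, hrest⟩, ?_⟩
      intro x hxc y hx2 hxy
      subst hxy
      rcases List.mem_cons.mp hx2 with h' | h'
      · subst h'; exact (hc c (by simp)).2 x hxc hwW
      · rcases mem_weave cs ws x h' with h'' | ⟨c', hc', hx⟩
        · exact (hc c (by simp)).2 x hxc (hws x (by simp [h'']))
        · exact (List.pairwise_cons.mp hdisj).1 c' hc' hxc hx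

section Chain

variable {V : Type*} (G : SimpleGraph V) (Wset : Set V)
variable (hbip : ∀ w ∈ Wset, ∀ v ∉ Wset, G.Adj w v)

include hbip in
lemma chain_block (a : V) (ha : a ∈ Wset) (c : List V) (hc : c ≠ [])
    (hchain : c.Chain' G.Adj) (hW : ∀ v ∈ c, v ∉ Wset)
    (l₂ : List V) (h₂ : l₂.Chain' G.Adj) (hhead : ∀ y ∈ l₂.head?, y ∈ Wset) :
    List.Chain' G.Adj ((a :: c) ++ l₂) := by
  rw [List.Chain', List.isChain_append]
  refine ⟨?_, h₂, ?_⟩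
  · rw [List.isChain_cons]
    exact ⟨fun y hy => hbip a ha y (hW y (List.mem_of_mem_head? hy)), hchain⟩
  · intro x hx y hy
    have hx' : x ∈ c := by
      rw [List.getLast?_eq_getLast (l := a :: c) (by simp)] at hx
      simp only [Option.mem_def, Option.some.injEq] at hx
      rw [List.getLast_cons hc] at hx
      exact hx ▸ List.getLast_mem hc
    exact (hbip y (hhead y hy) x (hW x hx')).symm

include hbip in
lemma chain_weave :
    ∀ (ws : List V) (cs : List (List V)) (a b : V), a ∈ Wset → b ∈ Wset →
      (∀ w ∈ ws, w ∈ Wset) →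
      (∀ c ∈ cs, c ≠ [] ∧ c.Chain' G.Adj ∧ ∀ v ∈ c, v ∉ Wset) →
      cs.length = ws.length + 1 →
      List.Chain' G.Adj ((a :: weave cs ws) ++ [b])
  | [], cs, a, b, ha, hb, _, hc, hlen => by
      match cs, hlen with
      | [c], _ =>
        show List.Chain' G.Adj ((a :: c) ++ [b])
        exact chain_block G Wset hbip a ha c (hc c (by simp)).1 (hc c (by simp)).2.1
          (hc c (by simp)).2.2 [b] (List.isChain_singleton b) (by simp [hb])
  | w :: ws, c :: cs, a, b, ha, hb, hws, hc, hlen => by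
      simp only [List.length_cons, Nat.add_left_inj] at hlen
      have ih : List.Chain' G.Adj ((w :: weave cs ws) ++ [b]) :=
        chain_weave ws cs w b (hws w (by simp)) hb
          (fun x hx => hws x (by simp [hx]))
          (fun c' hc' => hc c' (by simp [hc'])) hlen
      have : (a :: weave (c :: cs) (w :: ws)) ++ [b]
          = (a :: c) ++ ((w :: weave cs ws) ++ [b]) := by
        show (a :: (c ++ w :: weave cs ws)) ++ [b] = _
        simp
      rw [this]
      exact chain_block G Wset hbip a ha c (hc c (by simp)).1 (hc c (by simp)).2.1
        (hc c (by simp)).2.2 _ ih (by simp [hws w (by simp)])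

end Chain

/-- Build a walk from a chain. -/
lemma exists_walk_of_chain {V : Type*} (G : SimpleGraph V) :
    ∀ (l : List V) (a b : V), List.Chain G.Adj a l →
      (a :: l).getLast (by simp) = b → ∃ p : G.Walk a b, p.support = a :: l
  | [], a, b, _, hl => by
      simp only [List.getLast_singleton] at hl
      subst hl
      exact ⟨SimpleGraph.Walk.nil, rfl⟩
  | x :: xs, a, b, hc, hl => by
      rw [List.Chain, List.isChain_cons_cons] at hc
      rw [List.getLast_cons (by simp)] at hl
      obtain ⟨p, hp⟩ := exists_walk_of_chain G xs x b hc.2 hl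
      exact ⟨SimpleGraph.Walk.cons hc.1 p, by simp [hp]⟩

end Stmt19Aux

open Stmt19Aux in
/-- Threading a path through `W` and prescribed components: if every component of `D − W`
is complete, `c(D − W) ≥ 3`, the bipartite graph between `W` and the rest is complete, and
`c(D − W) ≥ |W| + 1`, then for distinct `a, b ∈ W` and any prescribed family of `|W| − 1`
components there is an `a`–`b` path covering `W` and those components. -/
theorem stmt_19 {V : Type*} [Fintype V] [DecidableEq V] (G : SimpleGraph V)
    (W : Set V)
    (hcomp : ∀ u v : ↥(Wᶜ), u ≠ v → (G.induce Wᶜ).Reachable u v → (G.induce Wᶜ).Adj u v)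
    (hc3 : 3 ≤ numComp G W)
    (hbip : ∀ w ∈ W, ∀ v ∉ W, G.Adj w v)
    (hcW : W.ncard + 1 ≤ numComp G W)
    (a b : V) (ha : a ∈ W) (hb : b ∈ W) (hab : a ≠ b)
    (F : Set ((G.induce Wᶜ).ConnectedComponent)) (hF : F.ncard = W.ncard - 1) :
    ∃ p : G.Walk a b, p.IsPath ∧ (∀ w ∈ W, w ∈ p.support) ∧
      ∀ c ∈ F, ∀ v ∈ c.supp, ↑v ∈ p.support := by
  classical
  -- the middle `W`-vertices
  set ws : List V := ((W \ {a, b}).toFinite.toFinset).toList with hws_def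
  have hws_mem : ∀ x, x ∈ ws ↔ x ∈ W \ {a, b} := by
    intro x; rw [hws_def, Finset.mem_toList, Set.Finite.mem_toFinset]
  have hws_nodup : ws.Nodup := Finset.nodup_toList _
  -- list of the prescribed components
  set lC : List ((G.induce Wᶜ).ConnectedComponent) := (F.toFinite.toFinset).toList with hlC_def
  have hlC_mem : ∀ c, c ∈ lC ↔ c ∈ F := by
    intro c; rw [hlC_def, Finset.mem_toList, Set.Finite.mem_toFinset]
  have hlC_nodup : lC.Nodup := Finset.nodup_toList _
  -- vertex list of each component
  set f : (G.induce Wᶜ).ConnectedComponent → List V :=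
    fun c => (c.supp.toFinite.toFinset).toList.map Subtype.val with hf_def
  have hf_mem : ∀ c (x : V), x ∈ f c ↔ ∃ u : ↥(Wᶜ), u ∈ c.supp ∧ ↑u = x := by
    intro c x
    rw [hf_def]
    simp only [List.mem_map, Finset.mem_toList, Set.Finite.mem_toFinset]
  set cs : List (List V) := lC.map f with hcs_def
  -- cardinalities
  have hW2 : 2 ≤ W.ncard := by
    have : ({a, b} : Set V) ⊆ W := by
      intro x hx; rcases hx with h | h
      · exact h ▸ ha
      · exact h ▸ hb
    calc 2 = ({a, b} : Set V).ncard := (Set.ncard_pair hab).symm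
    _ ≤ W.ncard := Set.ncard_le_ncard this W.toFinite
  have hws_len : ws.length = W.ncard - 2 := by
    rw [hws_def, Finset.length_toList, ← Set.ncard_eq_toFinset_card]
    rw [Set.ncard_diff (by intro x hx; rcases hx with h | h; exacts [h ▸ ha, h ▸ hb])]
    rw [Set.ncard_pair hab]
  have hcs_len : cs.length = ws.length + 1 := by
    rw [hcs_def, List.length_map, hlC_def, Finset.length_toList,
      ← Set.ncard_eq_toFinset_card, hF, hws_len]
    omega
  -- properties of the component lists
  have hblock : ∀ c ∈ cs, c ≠ [] ∧ c.Nodup ∧ c.Chain' G.Adj ∧ ∀ v ∈ c, v ∉ W := by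
    intro L hL
    rw [hcs_def, List.mem_map] at hL
    obtain ⟨c, _, rfl⟩ := hL
    have hne : f c ≠ [] := by
      obtain ⟨u, hu⟩ := c.exists_rep
      have := (hf_mem c ↑u).mpr ⟨u, by
        rw [SimpleGraph.ConnectedComponent.mem_supp_iff]; exact hu, rfl⟩
      intro h; rw [h] at this; exact List.not_mem_nil this
    have hnd : (f c).Nodup := (Finset.nodup_toList _).map Subtype.val_injective
    have hnW : ∀ v ∈ f c, v ∉ W := by
      intro v hv
      obtain ⟨u, _, rfl⟩ := (hf_mem c v).mp hv
      exact u.2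
    have hchain : (f c).Chain' G.Adj := by
      apply List.Pairwise.isChain
      rw [hf_def]
      rw [List.pairwise_map]
      have hnd0 : ((c.supp.toFinite.toFinset).toList).Nodup := Finset.nodup_toList _
      refine hnd0.imp_of_mem ?_
      intro u u' hu hu' huu'
      rw [Finset.mem_toList, Set.Finite.mem_toFinset] at hu hu'
      rw [SimpleGraph.ConnectedComponent.mem_supp_iff] at hu hu'
      have hr : (G.induce Wᶜ).Reachable u u' :=
        SimpleGraph.ConnectedComponent.exact (hu.trans hu'.symm)
      exact hcomp u u' huu' hr
    exact ⟨hne, hnd, hchain, hnW⟩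
  have hdisj : cs.Pairwise List.Disjoint := by
    rw [hcs_def, List.pairwise_map]
    refine hlC_nodup.imp_of_mem ?_
    intro c c' _ _ hcc' x hx hx'
    obtain ⟨u, hu, rfl⟩ := (hf_mem c x).mp hx
    obtain ⟨u', hu', huu'⟩ := (hf_mem c' _).mp hx'
    have : u' = u := Subtype.val_injective huu'
    subst this
    rw [SimpleGraph.ConnectedComponent.mem_supp_iff] at hu hu'
    exact hcc' (hu.symm.trans hu')
  -- the full list
  have hchainL : List.Chain' G.Adj ((a :: weave cs ws) ++ [b]) := by
    refine chain_weave G W hbip ws cs a b ha hb ?_ ?_ hcs_len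
    · intro w hw; exact ((hws_mem w).mp hw).1
    · intro c hc; exact ⟨(hblock c hc).1, (hblock c hc).2.2.1, (hblock c hc).2.2.2⟩
  have hmid_nodup : (weave cs ws).Nodup := by
    refine weave_nodup W cs ws hws_nodup (fun w hw => ((hws_mem w).mp hw).1) ?_ hdisj
    intro c hc; exact ⟨(hblock c hc).2.1, (hblock c hc).2.2.2⟩
  have hanotin : a ∉ weave cs ws := by
    intro hmem
    rcases mem_weave cs ws a hmem with h | ⟨c, hc, hx⟩
    · exact ((hws_mem a).mp h).2 (by simp)
    · exact (hblock c hc).2.2.2 a hx ha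
  have hbnotin : b ∉ weave cs ws := by
    intro hmem
    rcases mem_weave cs ws b hmem with h | ⟨c, hc, hx⟩
    · exact ((hws_mem b).mp h).2 (by simp)
    · exact (hblock c hc).2.2.2 b hx hb
  have hnodupL : ((a :: weave cs ws) ++ [b]).Nodup := by
    rw [List.nodup_append]
    refine ⟨List.nodup_cons.mpr ⟨hanotin, hmid_nodup⟩, List.nodup_singleton b, ?_⟩
    intro x hx y hx' hxy
    subst hxy
    rw [List.mem_singleton] at hx'
    subst hx'
    rcases List.mem_cons.mp hx with h | h
    · exact hab h.symm
    · exact hbnotin h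
  -- build the walk
  have hlast : ((a :: (weave cs ws ++ [b]))).getLast (by simp) = b := by
    simp [List.getLast_append]
  obtain ⟨p, hp⟩ := exists_walk_of_chain G (weave cs ws ++ [b]) a b
    (by exact hchainL) hlast
  refine ⟨p, ?_, ?_, ?_⟩
  · rw [SimpleGraph.Walk.isPath_def, hp]
    exact hnodupL
  · intro w hw
    rw [hp]
    by_cases hwa : w = a
    · simp [hwa]
    by_cases hwb : w = b
    · simp [hwb]
    · have : w ∈ ws := (hws_mem w).mpr ⟨hw, by simp [hwa, hwb]⟩
      have := weave_mem cs ws hcs_len w (Or.inl this)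
      simp [this]
  · intro c hc v hv
    rw [hp]
    have hxf : (v : V) ∈ f c := (hf_mem c ↑v).mpr ⟨v, hv, rfl⟩
    have hcmem : f c ∈ cs := by
      rw [hcs_def, List.mem_map]
      exact ⟨c, (hlC_mem c).mpr hc, rfl⟩
    have := weave_mem cs ws hcs_len ↑v (Or.inr ⟨f c, hcmem, hxf⟩)
    simp [this]
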